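/- The function m ↦ −m²/2 − I(m), where I(m) = −((1−m)/2)log((1−m)/2) − ((1+m)/2)log((1+m)/2), is convex, even, and attains its minimum at m = 0 on [−1,1]. -/

import Mathlib

noncomputable def entI (m : ℝ) : ℝ :=
  -((1 - m) / 2 * Real.log ((1 - m) / 2)) - (1 + m) / 2 * Real.log ((1 + m) / 2)

noncomputable def g₀ (m : ℝ) : ℝ := -m ^ 2 / 2 - entI m

lemma g₀_hasDerivAt {m : ℝ} (h1 : -1 < m) (h2 : m < 1) :
    HasDerivAt g₀ (-m - (Real.log ((1 - m) / 2) - Real.log ((1 + m) / 2)) / 2) m := by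
  have hu1 : (0:ℝ) < (1 - m) / 2 := by linarith
  have hu2 : (0:ℝ) < (1 + m) / 2 := by linarith
  have hd1 : HasDerivAt (fun x : ℝ => (1 - x) / 2) (-(1/2)) m := by
    have := ((hasDerivAt_id m).const_sub 1).div_const 2
    convert! this using 1 <;> norm_num
  have hd2 : HasDerivAt (fun x : ℝ => (1 + x) / 2) (1/2) m := by
    have := ((hasDerivAt_id m).const_add 1).div_const 2
    convert! this using 1 <;> norm_num
  have hA : HasDerivAt (fun x : ℝ => (1 - x) / 2 * Real.log ((1 - x) / 2))
      ((Real.log ((1 - m) / 2) + 1) * (-(1/2))) m :=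
    (Real.hasDerivAt_mul_log hu1.ne').comp m hd1 (h₂ := fun y => y * Real.log y)
  have hB : HasDerivAt (fun x : ℝ => (1 + x) / 2 * Real.log ((1 + x) / 2))
      ((Real.log ((1 + m) / 2) + 1) * (1/2)) m :=
    (Real.hasDerivAt_mul_log hu2.ne').comp m hd2 (h₂ := fun y => y * Real.log y)
  have hC : HasDerivAt (fun x : ℝ => -x ^ 2 / 2) (-m) m := by
    have := ((hasDerivAt_pow 2 m).neg).div_const 2
    convert! this using 1
    simp; ring
  have h := (hC.add hA).add hB
  have hfun : g₀ = fun x : ℝ => -x ^ 2 / 2 + (1 - x) / 2 * Real.log ((1 - x) / 2)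
      + (1 + x) / 2 * Real.log ((1 + x) / 2) := by
    funext x; simp [g₀, entI]; ring
  rw [hfun]
  convert! h using 1
  ring

lemma g₀'_hasDerivAt {m : ℝ} (h1 : -1 < m) (h2 : m < 1) :
    HasDerivAt (fun x : ℝ => -x - (Real.log ((1 - x) / 2) - Real.log ((1 + x) / 2)) / 2)
      (m ^ 2 / (1 - m ^ 2)) m := by
  have hu1 : (0:ℝ) < (1 - m) / 2 := by linarith
  have hu2 : (0:ℝ) < (1 + m) / 2 := by linarith
  have hd1 : HasDerivAt (fun x : ℝ => (1 - x) / 2) (-(1/2)) m := by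
    have := ((hasDerivAt_id m).const_sub 1).div_const 2
    convert! this using 1 <;> norm_num
  have hd2 : HasDerivAt (fun x : ℝ => (1 + x) / 2) (1/2) m := by
    have := ((hasDerivAt_id m).const_add 1).div_const 2
    convert! this using 1 <;> norm_num
  have hL1 : HasDerivAt (fun x : ℝ => Real.log ((1 - x) / 2))
      ((-(1/2)) / ((1 - m) / 2)) m := hd1.log hu1.ne'
  have hL2 : HasDerivAt (fun x : ℝ => Real.log ((1 + x) / 2))
      ((1/2) / ((1 + m) / 2)) m := hd2.log hu2.ne'
  have h := ((hasDerivAt_id m).neg).sub (((hL1.sub hL2).div_const 2))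
  convert! h using 1
  have hm1 : (1:ℝ) - m ≠ 0 := by linarith
  have hm2 : (1:ℝ) + m ≠ 0 := by linarith
  have hm3 : (1:ℝ) - m ^ 2 ≠ 0 := by nlinarith
  field_simp
  ring

theorem g₀_convex_even_min :
    ConvexOn ℝ (Set.Icc (-1:ℝ) 1) g₀ ∧
    (∀ m : ℝ, g₀ (-m) = g₀ m) ∧
    (∀ m ∈ Set.Icc (-1:ℝ) 1, g₀ 0 ≤ g₀ m) := by
  have heven : ∀ m : ℝ, g₀ (-m) = g₀ m := by
    intro m
    have e1 : (1 : ℝ) - -m = 1 + m := by ring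
    have e2 : (1 : ℝ) + -m = 1 - m := by ring
    simp only [g₀, entI, e1, e2]
    ring
  have hconv : ConvexOn ℝ (Set.Icc (-1:ℝ) 1) g₀ := by
    have hcont : ContinuousOn g₀ (Set.Icc (-1:ℝ) 1) := by
      have h1 : Continuous fun x : ℝ => (1 - x) / 2 * Real.log ((1 - x) / 2) :=
        Real.continuous_mul_log.comp (by continuity)
      have h2 : Continuous fun x : ℝ => (1 + x) / 2 * Real.log ((1 + x) / 2) :=
        Real.continuous_mul_log.comp (by continuity)
      have : Continuous g₀ := by
        have : Continuous fun x : ℝ => -x ^ 2 / 2 - (-( (1 - x) / 2 * Real.log ((1 - x) / 2)) -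
            (1 + x) / 2 * Real.log ((1 + x) / 2)) := by
          exact ((continuous_pow 2).neg.div_const 2).sub (h1.neg.sub h2)
        exact this
      exact this.continuousOn
    refine convexOn_of_hasDerivWithinAt2_nonneg (convex_Icc _ _) hcont
      (f' := fun x => -x - (Real.log ((1 - x) / 2) - Real.log ((1 + x) / 2)) / 2)
      (f'' := fun x => x ^ 2 / (1 - x ^ 2)) ?_ ?_ ?_
    · intro x hx
      rw [interior_Icc] at hx
      exact (g₀_hasDerivAt hx.1 hx.2).hasDerivWithinAt
    · intro x hx
      rw [interior_Icc] at hx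
      exact (g₀'_hasDerivAt hx.1 hx.2).hasDerivWithinAt
    · intro x hx
      rw [interior_Icc] at hx
      have : (0:ℝ) < 1 - x ^ 2 := by nlinarith [hx.1, hx.2]
      positivity
  refine ⟨hconv, heven, fun m hm => ?_⟩
  have hm' : -m ∈ Set.Icc (-1:ℝ) 1 := by
    simp only [Set.mem_Icc] at hm ⊢; constructor <;> linarith [hm.1, hm.2]
  have h := hconv.2 hm hm' (by norm_num : (0:ℝ) ≤ 1/2) (by norm_num : (0:ℝ) ≤ 1/2)
    (by norm_num)
  have e : (1/2 : ℝ) • m + (1/2 : ℝ) • (-m) = 0 := by simp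
  rw [e, heven m] at h; simp only [smul_eq_mul] at h
  linarith
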